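/- For the checkerboard-synchronisation IPS on an even-sized grid, from any configuration x with d₁(x) ≤ 1/2 and with both a 1 on some even cell and a 1 on some odd cell, there exists a finite sequence of interactions (diagonal swaps and allowed adjacent swaps) leading to a configuration with strictly more even cells in state 1 and the same total number of 1s. -/

import Mathlib

open scoped Classical

/-- 4-neighbour adjacency on the torus. -/
def adj4 {n₁ n₂ : ℕ} (p q : ZMod n₁ × ZMod n₂) : Prop :=
  q = p + (1, 0) ∨ q = p + (0, 1) ∨ q = p + (-1, 0) ∨ q = p + (0, -1)

/-- Diagonal adjacency on the torus. -/
def diag4 {n₁ n₂ : ℕ} (p q : ZMod n₁ × ZMod n₂) : Prop :=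
  q = p + (1, 1) ∨ q = p + (1, -1) ∨ q = p + (-1, 1) ∨ q = p + (-1, -1)

/-- A cell is isolated if none of its 4-neighbours shares its state. -/
def isolated {n₁ n₂ : ℕ} (x : ZMod n₁ × ZMod n₂ → Bool) (p : ZMod n₁ × ZMod n₂) : Prop :=
  ∀ q : ZMod n₁ × ZMod n₂, adj4 p q → x q ≠ x p

/-- `τ(x,(i,j))`: exchange the states of cells `i` and `j`. -/
def swap {n₁ n₂ : ℕ} (x : ZMod n₁ × ZMod n₂ → Bool) (i j : ZMod n₁ × ZMod n₂) :
    ZMod n₁ × ZMod n₂ → Bool :=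
  fun c => if c = i then x j else if c = j then x i else x c

/-- The checkerboard-synchronisation IPS rule `Φ_C`: on an adjacent pair, swap
iff both cells are non-isolated; on a diagonal pair, always swap. -/
noncomputable def PhiC {n₁ n₂ : ℕ} (x : ZMod n₁ × ZMod n₂ → Bool)
    (i j : ZMod n₁ × ZMod n₂) : ZMod n₁ × ZMod n₂ → Bool :=
  if adj4 i j then
    (if ¬isolated x i ∧ ¬isolated x j then swap x i j else x)
  else if diag4 i j then swap x i j else x

/-- Membership in `C = C_e^0 ∪ C_e^1 ∪ C_o^0 ∪ C_o^1`: some state appears only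
on cells of one parity (a "sub-checkerboard"). -/
def InC {n₁ n₂ : ℕ} (x : ZMod n₁ × ZMod n₂ → Bool) : Prop :=
  (∀ c : ZMod n₁ × ZMod n₂, x c = true → Even (c.1.val + c.2.val)) ∨
  (∀ c : ZMod n₁ × ZMod n₂, x c = true → ¬Even (c.1.val + c.2.val)) ∨
  (∀ c : ZMod n₁ × ZMod n₂, x c = false → Even (c.1.val + c.2.val)) ∨
  (∀ c : ZMod n₁ × ZMod n₂, x c = false → ¬Even (c.1.val + c.2.val))

/-- Number of even cells in state 1. -/
noncomputable def mEven {n₁ n₂ : ℕ} [NeZero n₁] [NeZero n₂]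
    (x : ZMod n₁ × ZMod n₂ → Bool) : ℕ :=
  (Finset.univ.filter
    (fun c : ZMod n₁ × ZMod n₂ => x c = true ∧ Even (c.1.val + c.2.val))).card

/-- Number of cells in state 1. -/
noncomputable def ones {n₁ n₂ : ℕ} [NeZero n₁] [NeZero n₂]
    (x : ZMod n₁ × ZMod n₂ → Bool) : ℕ :=
  (Finset.univ.filter (fun c : ZMod n₁ × ZMod n₂ => x c = true)).card



section Aux

variable {n₁ n₂ : ℕ}

lemma zmod_one_ne_zero {n : ℕ} (h : 2 ≤ n) : (1 : ZMod n) ≠ 0 := by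
  haveI : Fact (1 < n) := ⟨h⟩
  exact one_ne_zero

lemma zmod_neg_one_ne_zero {n : ℕ} (h : 2 ≤ n) : (-1 : ZMod n) ≠ 0 := by
  simpa [neg_eq_zero] using zmod_one_ne_zero h

lemma swap_self (z : ZMod n₁ × ZMod n₂ → Bool) (i : ZMod n₁ × ZMod n₂) : swap z i i = z := by
  funext c
  simp only [swap]
  split_ifs with h
  · rw [h]
  · rfl

lemma swap_left (z : ZMod n₁ × ZMod n₂ → Bool) (i j : ZMod n₁ × ZMod n₂) :
    swap z i j i = z j := by simp [swap]

lemma swap_right (z : ZMod n₁ × ZMod n₂ → Bool) (i j : ZMod n₁ × ZMod n₂) :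
    swap z i j j = z i := by
  by_cases h : j = i <;> simp [swap, h]

lemma swap_other (z : ZMod n₁ × ZMod n₂ → Bool) {i j c : ZMod n₁ × ZMod n₂}
    (h1 : c ≠ i) (h2 : c ≠ j) : swap z i j c = z c := by simp [swap, h1, h2]

lemma swap_eq_comp (z : ZMod n₁ × ZMod n₂ → Bool) (i j : ZMod n₁ × ZMod n₂) :
    swap z i j = z ∘ (Equiv.swap i j) := by
  funext c
  simp only [swap, Function.comp, Equiv.swap_apply_def]
  split_ifs <;> rfl

lemma diag_not_adj (h1 : 2 ≤ n₁) (h2 : 2 ≤ n₂) {p q : ZMod n₁ × ZMod n₂}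
    (hd : diag4 p q) : ¬ adj4 p q := by
  have e1 := zmod_one_ne_zero (n := n₁) h1
  have e2 := zmod_one_ne_zero (n := n₂) h2
  have f1 := zmod_neg_one_ne_zero (n := n₁) h1
  have f2 := zmod_neg_one_ne_zero (n := n₂) h2
  intro ha
  rcases hd with h|h|h|h <;> rcases ha with h'|h'|h'|h' <;>
    (rw [h] at h'
     have h2' := add_left_cancel h'
     simp only [Prod.mk.injEq] at h2'
     obtain ⟨ha', hb'⟩ := h2'
     first
       | exact e1 ha' | exact e2 hb' | exact f1 ha' | exact f2 hb')

lemma PhiC_diag (h1 : 2 ≤ n₁) (h2 : 2 ≤ n₂) (z : ZMod n₁ × ZMod n₂ → Bool)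
    {i j : ZMod n₁ × ZMod n₂} (hd : diag4 i j) : PhiC z i j = swap z i j := by
  unfold PhiC
  rw [if_neg (diag_not_adj h1 h2 hd), if_pos hd]

lemma PhiC_adj (z : ZMod n₁ × ZMod n₂ → Bool) {i j : ZMod n₁ × ZMod n₂}
    (ha : adj4 i j) (hi : ¬ isolated z i) (hj : ¬ isolated z j) :
    PhiC z i j = swap z i j := by
  unfold PhiC
  rw [if_pos ha, if_pos ⟨hi, hj⟩]

/-- Reachability by a finite sequence of interactions. -/
def Reach {n₁ n₂ : ℕ} (x y : ZMod n₁ × ZMod n₂ → Bool) : Prop :=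
  ∃ us : List ((ZMod n₁ × ZMod n₂) × (ZMod n₁ × ZMod n₂)),
    (∀ u ∈ us, adj4 u.1 u.2 ∨ diag4 u.1 u.2) ∧
    us.foldl (fun z u => PhiC z u.1 u.2) x = y

lemma Reach.refl (x : ZMod n₁ × ZMod n₂ → Bool) : Reach x x :=
  ⟨[], by simp, rfl⟩

lemma Reach.trans {x y z : ZMod n₁ × ZMod n₂ → Bool} (h1 : Reach x y) (h2 : Reach y z) :
    Reach x z := by
  obtain ⟨us1, hm1, hf1⟩ := h1
  obtain ⟨us2, hm2, hf2⟩ := h2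
  refine ⟨us1 ++ us2, ?_, ?_⟩
  · intro u hu
    rcases List.mem_append.mp hu with h | h
    · exact hm1 u h
    · exact hm2 u h
  · rw [List.foldl_append, hf1, hf2]

lemma Reach.single {x y : ZMod n₁ × ZMod n₂ → Bool} {i j : ZMod n₁ × ZMod n₂}
    (h : adj4 i j ∨ diag4 i j) (hy : PhiC x i j = y) : Reach x y :=
  ⟨[(i, j)], by simpa using h, by simpa using hy⟩



section Counting


variable {n₁ n₂ : ℕ}

lemma card_filter_comp {α : Type*} [Fintype α] [DecidableEq α] (σ : Equiv.Perm α) (P : α → Prop)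
    [DecidablePred P] [DecidablePred fun c => P (σ c)] :
    (Finset.univ.filter fun c => P (σ c)).card = (Finset.univ.filter P).card := by
  have himg : (Finset.univ.filter fun c => P (σ c)) = (Finset.univ.filter P).image σ.symm := by
    ext c
    simp only [Finset.mem_filter, Finset.mem_univ, true_and, Finset.mem_image]
    constructor
    · intro h; exact ⟨σ c, h, by simp⟩
    · rintro ⟨d, hd, rfl⟩; simpa using hd
  rw [himg, Finset.card_image_of_injective _ σ.symm.injective]

lemma even_sum_iff (hd1 : 2 ∣ n₁) (hd2 : 2 ∣ n₂) [NeZero n₁] [NeZero n₂]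
    (c : ZMod n₁ × ZMod n₂) :
    Even (c.1.val + c.2.val) ↔
      ZMod.castHom hd1 (ZMod 2) c.1 + ZMod.castHom hd2 (ZMod 2) c.2 = 0 := by
  have k1 : ((c.1.val : ℕ) : ZMod 2) = ZMod.castHom hd1 (ZMod 2) c.1 := by
    rw [ZMod.natCast_val, ZMod.castHom_apply]
  have k2 : ((c.2.val : ℕ) : ZMod 2) = ZMod.castHom hd2 (ZMod 2) c.2 := by
    rw [ZMod.natCast_val, ZMod.castHom_apply]
  rw [even_iff_two_dvd, ← ZMod.natCast_eq_zero_iff, Nat.cast_add, k1, k2]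

lemma card_even_odd (hd1 : 2 ∣ n₁) (hd2 : 2 ∣ n₂) [NeZero n₁] [NeZero n₂] :
    (Finset.univ.filter fun c : ZMod n₁ × ZMod n₂ => Even (c.1.val + c.2.val)).card =
      (Finset.univ.filter fun c : ZMod n₁ × ZMod n₂ => ¬ Even (c.1.val + c.2.val)).card := by
  have flip : ∀ c : ZMod n₁ × ZMod n₂,
      Even (((c + ((1 : ZMod n₁), (0 : ZMod n₂))).1).val + ((c + ((1:ZMod n₁),(0:ZMod n₂))).2).val)
        ↔ ¬ Even (c.1.val + c.2.val) := by
    intro c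
    rw [even_sum_iff hd1 hd2, even_sum_iff hd1 hd2]
    have : ∀ A : ZMod 2, A + 1 = 0 ↔ ¬ (A = 0) := by decide
    simp only [Prod.fst_add, Prod.snd_add, map_add, map_one, map_zero, add_zero]
    rw [show (ZMod.castHom hd1 (ZMod 2)) c.1 + 1 + (ZMod.castHom hd2 (ZMod 2)) c.2
        = ((ZMod.castHom hd1 (ZMod 2)) c.1 + (ZMod.castHom hd2 (ZMod 2)) c.2) + 1 by ring]
    exact this _
  have hcc := card_filter_comp (Equiv.addRight ((1 : ZMod n₁), (0 : ZMod n₂)))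
      (fun c : ZMod n₁ × ZMod n₂ => Even (c.1.val + c.2.val))
  refine Eq.trans hcc.symm ?_
  congr 1
  ext c
  simp only [Finset.mem_filter, Finset.mem_univ, true_and, Equiv.coe_addRight]
  exact (Finset.mem_filter.trans (and_iff_right (Finset.mem_univ c))).trans (flip c)

lemma two_mul_card_even (hd1 : 2 ∣ n₁) (hd2 : 2 ∣ n₂) [NeZero n₁] [NeZero n₂] :
    2 * (Finset.univ.filter fun c : ZMod n₁ × ZMod n₂ => Even (c.1.val + c.2.val)).card
      = n₁ * n₂ := by
  have hsum := Finset.card_filter_add_card_filter_not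
    (s := (Finset.univ : Finset (ZMod n₁ × ZMod n₂)))
    (p := fun c => Even (c.1.val + c.2.val))
  have hcard : (Finset.univ : Finset (ZMod n₁ × ZMod n₂)).card = n₁ * n₂ := by
    simp [Finset.card_univ, ZMod.card]
  have heo := card_even_odd hd1 hd2
  omega

lemma two_mul_card_odd (hd1 : 2 ∣ n₁) (hd2 : 2 ∣ n₂) [NeZero n₁] [NeZero n₂] :
    2 * (Finset.univ.filter fun c : ZMod n₁ × ZMod n₂ => ¬ Even (c.1.val + c.2.val)).card
      = n₁ * n₂ := by
  have hsum := Finset.card_filter_add_card_filter_not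
    (s := (Finset.univ : Finset (ZMod n₁ × ZMod n₂)))
    (p := fun c => Even (c.1.val + c.2.val))
  have hcard : (Finset.univ : Finset (ZMod n₁ × ZMod n₂)).card = n₁ * n₂ := by
    simp [Finset.card_univ, ZMod.card]
  have heo := card_even_odd hd1 hd2
  omega

end Counting

section SwapCount2


variable {n₁ n₂ : ℕ} [NeZero n₁] [NeZero n₂]

lemma ones_swap (z : ZMod n₁ × ZMod n₂ → Bool) (i j : ZMod n₁ × ZMod n₂) :
    ones (swap z i j) = ones z := by
  rw [swap_eq_comp]
  unfold ones
  exact card_filter_comp (Equiv.swap i j) (fun c => z c = true)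

lemma mEven_swap (z : ZMod n₁ × ZMod n₂ → Bool) {i j : ZMod n₁ × ZMod n₂}
    (hij : Even (i.1.val + i.2.val) ↔ Even (j.1.val + j.2.val)) :
    mEven (swap z i j) = mEven z := by
  rw [swap_eq_comp]
  unfold mEven
  have hpar : ∀ c : ZMod n₁ × ZMod n₂,
      Even (((Equiv.swap i j) c).1.val + ((Equiv.swap i j) c).2.val)
        ↔ Even (c.1.val + c.2.val) := by
    intro c
    rcases eq_or_ne c i with rfl | hci
    · rw [Equiv.swap_apply_left]; exact hij.symm
    rcases eq_or_ne c j with rfl | hcj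
    · rw [Equiv.swap_apply_right]; exact hij
    · rw [Equiv.swap_apply_of_ne_of_ne hci hcj]
  have hfe : (Finset.univ.filter
        fun c : ZMod n₁ × ZMod n₂ => (z ∘ (Equiv.swap i j)) c = true ∧ Even (c.1.val + c.2.val))
      = (Finset.univ.filter
        fun c : ZMod n₁ × ZMod n₂ => z ((Equiv.swap i j) c) = true
          ∧ Even (((Equiv.swap i j) c).1.val + ((Equiv.swap i j) c).2.val)) := by
    ext c
    simp only [Finset.mem_filter, Finset.mem_univ, true_and, Function.comp]
    rw [hpar c]
  rw [hfe]
  exact card_filter_comp (Equiv.swap i j)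
    (fun c : ZMod n₁ × ZMod n₂ => z c = true ∧ Even (c.1.val + c.2.val))

lemma mEven_swap_inc (z : ZMod n₁ × ZMod n₂ → Bool) {i j : ZMod n₁ × ZMod n₂}
    (hi : ¬ Even (i.1.val + i.2.val)) (hj : Even (j.1.val + j.2.val))
    (hzi : z i = true) (hzj : z j = false) :
    mEven (swap z i j) = mEven z + 1 := by
  have hij : i ≠ j := fun h => hi (h ▸ hj)
  have hset : (Finset.univ.filter
        fun c : ZMod n₁ × ZMod n₂ => swap z i j c = true ∧ Even (c.1.val + c.2.val))
      = insert j (Finset.univ.filter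
        fun c : ZMod n₁ × ZMod n₂ => z c = true ∧ Even (c.1.val + c.2.val)) := by
    ext c
    simp only [Finset.mem_filter, Finset.mem_univ, true_and, Finset.mem_insert]
    rcases eq_or_ne c i with rfl | hci
    · rw [swap_left]
      constructor
      · rintro ⟨-, h⟩; exact absurd h hi
      · rintro (h | ⟨-, h⟩)
        · exact absurd h hij
        · exact absurd h hi
    rcases eq_or_ne c j with rfl | hcj
    · rw [swap_right]
      constructor
      · intro _; exact Or.inl rfl
      · intro _; exact ⟨hzi, hj⟩
    · rw [swap_other z hci hcj]
      constructor
      · intro h; exact Or.inr h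
      · rintro (h | h)
        · exact absurd h hcj
        · exact h
  unfold mEven
  rw [hset, Finset.card_insert_of_notMem]
  simp [hzj]

end SwapCount2

section Chain

variable {n₁ n₂ : ℕ}

/-- A diagonal step vector. -/
def IsStep (v : ZMod n₁ × ZMod n₂) : Prop :=
  v = (1, 1) ∨ v = (1, -1) ∨ v = (-1, 1) ∨ v = (-1, -1)

lemma diag4_add_step {v : ZMod n₁ × ZMod n₂} (hv : IsStep v) (p : ZMod n₁ × ZMod n₂) :
    diag4 p (p + v) := by
  rcases hv with rfl | rfl | rfl | rfl <;> simp [diag4]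

lemma step_ne_zero (h1 : 2 ≤ n₁) {v : ZMod n₁ × ZMod n₂} (hv : IsStep v) : v ≠ 0 := by
  haveI : Fact (1 < n₁) := ⟨h1⟩
  rcases hv with rfl | rfl | rfl | rfl <;>
    (intro h; rw [Prod.ext_iff] at h; simp at h)

lemma swap_conj (z : ZMod n₁ × ZMod n₂ → Bool) {p p' d : ZMod n₁ × ZMod n₂}
    (h1 : p ≠ p') (h2 : p' ≠ d) (h3 : p ≠ d) :
    swap (swap (swap z p p') p' d) p p' = swap z p d := by
  funext c
  rcases eq_or_ne c p with rfl | hcp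
  · exact ((swap_left _ _ _).trans ((swap_left _ _ _).trans
      (swap_other _ (fun h => h3 h.symm) (fun h => h2 h.symm)))).trans
      (swap_left _ _ _).symm
  rcases eq_or_ne c p' with rfl | hcp'
  · exact ((swap_right _ _ _).trans ((swap_other _ h1 h3).trans
      (swap_left _ _ _))).trans (swap_other _ (fun h => h1 h.symm) h2).symm
  rcases eq_or_ne c d with rfl | hcd
  · exact ((swap_other _ hcp hcp').trans ((swap_right _ _ _).trans
      (swap_right _ _ _))).trans (swap_right _ _ _).symm
  · exact ((swap_other _ hcp hcp').trans ((swap_other _ hcp' hcd).trans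
      (swap_other _ hcp hcp'))).trans (swap_other _ hcp hcd).symm

lemma reach_chain (h1 : 2 ≤ n₁) (h2 : 2 ≤ n₂) :
    ∀ (l : List (ZMod n₁ × ZMod n₂)), (∀ v ∈ l, IsStep v) →
      ∀ (z : ZMod n₁ × ZMod n₂ → Bool) (p : ZMod n₁ × ZMod n₂),
        Reach z (swap z p (p + l.sum)) := by
  intro l
  induction l with
  | nil =>
    intro _ z p
    simpa [swap_self] using Reach.refl z
  | cons v l ih =>
    intro hmem z p
    have hv : IsStep v := hmem v List.mem_cons_self
    have hl : ∀ w ∈ l, IsStep w := fun w hw => hmem w (List.mem_cons_of_mem _ hw)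
    have hsum : p + (v :: l).sum = (p + v) + l.sum := by
      rw [List.sum_cons, add_assoc]
    rw [hsum]
    set p' := p + v with hp'
    set d := (p + v) + l.sum with hdd
    have hpp' : p ≠ p' := by
      intro h
      exact step_ne_zero h1 hv (by simpa using (left_eq_add.mp h))
    by_cases hpd : p = d
    · rw [← hpd, swap_self]; exact Reach.refl z
    by_cases hp'd : p' = d
    · refine Reach.single (i := p) (j := d) (Or.inr ?_) ?_
      · rw [← hp'd]; exact diag4_add_step hv p
      · exact PhiC_diag h1 h2 z (by rw [← hp'd]; exact diag4_add_step hv p)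
    · have r1 : Reach z (swap z p p') :=
        Reach.single (Or.inr (diag4_add_step hv p)) (PhiC_diag h1 h2 z (diag4_add_step hv p))
      have r2 : Reach (swap z p p') (swap (swap z p p') p' (p' + l.sum)) := ih hl _ p'
      have r2' : Reach (swap z p p') (swap (swap z p p') p' d) := by
        rwa [← hdd] at r2
      have r3 : Reach (swap (swap z p p') p' d)
          (swap (swap (swap z p p') p' d) p p') :=
        Reach.single (Or.inr (diag4_add_step hv p)) (PhiC_diag h1 h2 _ (diag4_add_step hv p))
      have := (r1.trans r2').trans r3
      rwa [swap_conj z hpp' hp'd hpd] at this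

lemma toNat_smul {M : Type*} [AddCommGroup M] (γ : ℤ) (x : M) :
    γ.toNat • x + (-γ).toNat • (-x) = γ • x := by
  have h : ((γ.toNat : ℤ) - ((-γ).toNat : ℤ)) = γ := by omega
  have e : γ.toNat • x + (-γ).toNat • (-x)
      = (γ.toNat : ℤ) • x + ((-γ).toNat : ℤ) • (-x) := by
    rw [natCast_zsmul, natCast_zsmul]
  rw [e, smul_neg, ← sub_eq_add_neg, ← sub_smul, h]

lemma steps_exist (hd1 : 2 ∣ n₁) (hd2 : 2 ∣ n₂) [NeZero n₁] [NeZero n₂]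
    {p d : ZMod n₁ × ZMod n₂}
    (hp : Even (p.1.val + p.2.val) ↔ Even (d.1.val + d.2.val)) :
    ∃ l : List (ZMod n₁ × ZMod n₂), (∀ v ∈ l, IsStep v) ∧ p + l.sum = d := by
  set δ : ZMod n₁ × ZMod n₂ := d - p with hδ
  have hparδ : ZMod.castHom hd1 (ZMod 2) δ.1 + ZMod.castHom hd2 (ZMod 2) δ.2 = 0 := by
    have key : ∀ A B : ZMod 2, (A = 0 ↔ B = 0) → B - A = 0 := by decide
    have hAB := key _ _ (((even_sum_iff hd1 hd2 p).symm.trans hp).trans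
      (even_sum_iff hd1 hd2 d))
    have h1' : δ.1 = d.1 - p.1 := by rw [hδ]; rfl
    have h2' : δ.2 = d.2 - p.2 := by rw [hδ]; rfl
    rw [h1', h2', map_sub, map_sub]
    rw [show (ZMod.castHom hd1 (ZMod 2)) d.1 - (ZMod.castHom hd1 (ZMod 2)) p.1 +
        ((ZMod.castHom hd2 (ZMod 2)) d.2 - (ZMod.castHom hd2 (ZMod 2)) p.2)
      = ((ZMod.castHom hd1 (ZMod 2)) d.1 + (ZMod.castHom hd2 (ZMod 2)) d.2) -
        ((ZMod.castHom hd1 (ZMod 2)) p.1 + (ZMod.castHom hd2 (ZMod 2)) p.2) by ring]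
    exact hAB
  have h2dvd : 2 ∣ (δ.1.val + δ.2.val) := by
    rw [← even_iff_two_dvd]
    exact (even_sum_iff hd1 hd2 δ).mpr hparδ
  obtain ⟨k, hk⟩ := h2dvd
  have hst : (δ.1.val : ℤ) + (δ.2.val : ℤ) = 2 * k := by exact_mod_cast hk
  set α : ℤ := (k : ℤ) with hα
  set β : ℤ := (δ.1.val : ℤ) - (k : ℤ) with hβ
  have hab1 : α + β = (δ.1.val : ℤ) := by omega
  have hab2 : α - β = (δ.2.val : ℤ) := by omega
  refine ⟨List.replicate α.toNat ((1 : ZMod n₁), (1 : ZMod n₂)) ++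
      List.replicate (-α).toNat ((-1 : ZMod n₁), (-1 : ZMod n₂)) ++
      List.replicate β.toNat ((1 : ZMod n₁), (-1 : ZMod n₂)) ++
      List.replicate (-β).toNat ((-1 : ZMod n₁), (1 : ZMod n₂)), ?_, ?_⟩
  · intro v hv
    simp only [List.mem_append, List.mem_replicate] at hv
    rcases hv with ((⟨-, rfl⟩ | ⟨-, rfl⟩) | ⟨-, rfl⟩) | ⟨-, rfl⟩ <;>
      simp [IsStep]
  · have hsum : (List.replicate α.toNat ((1 : ZMod n₁), (1 : ZMod n₂)) ++
        List.replicate (-α).toNat ((-1 : ZMod n₁), (-1 : ZMod n₂)) ++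
        List.replicate β.toNat ((1 : ZMod n₁), (-1 : ZMod n₂)) ++
        List.replicate (-β).toNat ((-1 : ZMod n₁), (1 : ZMod n₂))).sum
        = α • ((1 : ZMod n₁), (1 : ZMod n₂)) + β • ((1 : ZMod n₁), (-1 : ZMod n₂)) := by
      rw [List.sum_append, List.sum_append, List.sum_append,
        List.sum_replicate, List.sum_replicate, List.sum_replicate, List.sum_replicate]
      have e1 : ((-1 : ZMod n₁), (-1 : ZMod n₂)) = -((1 : ZMod n₁), (1 : ZMod n₂)) := by
        simp [Prod.ext_iff]
      have e2 : ((-1 : ZMod n₁), (1 : ZMod n₂)) = -((1 : ZMod n₁), (-1 : ZMod n₂)) := by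
        simp [Prod.ext_iff]
      rw [e1, e2, add_assoc (α.toNat • ((1 : ZMod n₁), (1 : ZMod n₂)))]
      rw [show α.toNat • ((1 : ZMod n₁), (1 : ZMod n₂)) +
          ((-α).toNat • -((1 : ZMod n₁), (1 : ZMod n₂)) +
            β.toNat • ((1 : ZMod n₁), (-1 : ZMod n₂))) +
          (-β).toNat • -((1 : ZMod n₁), (-1 : ZMod n₂))
        = (α.toNat • ((1 : ZMod n₁), (1 : ZMod n₂)) +
            (-α).toNat • -((1 : ZMod n₁), (1 : ZMod n₂))) +
          (β.toNat • ((1 : ZMod n₁), (-1 : ZMod n₂)) +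
            (-β).toNat • -((1 : ZMod n₁), (-1 : ZMod n₂))) by abel]
      rw [toNat_smul, toNat_smul]
    rw [hsum]
    have hc1 : (α • ((1 : ZMod n₁), (1 : ZMod n₂)) + β • ((1 : ZMod n₁), (-1 : ZMod n₂))) = δ := by
      have g1 : ((α : ZMod n₁) + (β : ZMod n₁)) = δ.1 := by
        rw [show (α : ZMod n₁) + (β : ZMod n₁) = ((α + β : ℤ) : ZMod n₁) by push_cast; ring,
          hab1]
        push_cast
        exact ZMod.natCast_zmod_val δ.1
      have g2 : ((α : ZMod n₂) - (β : ZMod n₂)) = δ.2 := by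
        rw [show (α : ZMod n₂) - (β : ZMod n₂) = ((α - β : ℤ) : ZMod n₂) by push_cast; ring,
          hab2]
        push_cast
        exact ZMod.natCast_zmod_val δ.2
      rw [Prod.ext_iff]
      constructor
      · simpa [Prod.smul_def, zsmul_eq_mul] using g1
      · simp only [Prod.snd_add, Prod.smul_def, Prod.snd, zsmul_eq_mul, mul_one, mul_neg]
        rw [← sub_eq_add_neg]
        exact g2
    rw [hc1, hδ]
    exact add_sub_cancel p d
  
lemma reach_swap_pair (h₁ : Even n₁) (h₂ : Even n₂) [NeZero n₁] [NeZero n₂]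
    (z : ZMod n₁ × ZMod n₂ → Bool) {p d : ZMod n₁ × ZMod n₂}
    (hp : Even (p.1.val + p.2.val) ↔ Even (d.1.val + d.2.val)) :
    Reach z (swap z p d) := by
  have hd1 : 2 ∣ n₁ := even_iff_two_dvd.mp h₁
  have hd2 : 2 ∣ n₂ := even_iff_two_dvd.mp h₂
  have h1 : 2 ≤ n₁ := Nat.le_of_dvd (Nat.pos_of_ne_zero (NeZero.ne n₁)) hd1
  have h2 : 2 ≤ n₂ := Nat.le_of_dvd (Nat.pos_of_ne_zero (NeZero.ne n₂)) hd2
  obtain ⟨l, hl, hsum⟩ := steps_exist hd1 hd2 hp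
  have := reach_chain h1 h2 l hl z p
  rwa [hsum] at this

end Chain

/-- on an even-sized grid, from any configuration `x` with
density of 1s at most 1/2 which has a 1 on some even cell and a 1 on some odd
cell, a finite sequence of `Φ_C`-interactions (adjacent or diagonal pairs)
leads to a configuration with one more even cell in state 1 and the same total
number of 1s. -/
theorem reachability_induction_step
    (n₁ n₂ : ℕ) [NeZero n₁] [NeZero n₂] (h₁ : Even n₁) (h₂ : Even n₂)
    (x : ZMod n₁ × ZMod n₂ → Bool)
    (hd : 2 * ones x ≤ n₁ * n₂)
    (he : ∃ c : ZMod n₁ × ZMod n₂, x c = true ∧ Even (c.1.val + c.2.val))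
    (ho : ∃ c : ZMod n₁ × ZMod n₂, x c = true ∧ ¬Even (c.1.val + c.2.val)) :
    ∃ us : List ((ZMod n₁ × ZMod n₂) × (ZMod n₁ × ZMod n₂)),
      (∀ u ∈ us, adj4 u.1 u.2 ∨ diag4 u.1 u.2) ∧
      mEven (us.foldl (fun z u => PhiC z u.1 u.2) x) = mEven x + 1 ∧
      ones (us.foldl (fun z u => PhiC z u.1 u.2) x) = ones x := by
  have hd1 : 2 ∣ n₁ := even_iff_two_dvd.mp h₁
  have hd2 : 2 ∣ n₂ := even_iff_two_dvd.mp h₂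
  have h1 : 2 ≤ n₁ := Nat.le_of_dvd (Nat.pos_of_ne_zero (NeZero.ne n₁)) hd1
  have h2 : 2 ≤ n₂ := Nat.le_of_dvd (Nat.pos_of_ne_zero (NeZero.ne n₂)) hd2
  haveI f1 : Fact (1 < n₁) := ⟨h1⟩
  haveI f2 : Fact (1 < n₂) := ⟨h2⟩
  obtain ⟨e, hxe, hee⟩ := he
  obtain ⟨o, hxo, hoo⟩ := ho
  set E : ZMod n₁ × ZMod n₂ := (0, 0) with hE
  set I : ZMod n₁ × ZMod n₂ := (1, 0) with hI
  set J : ZMod n₁ × ZMod n₂ := (1, 1) with hJ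
  set K : ZMod n₁ × ZMod n₂ := (0, 1) with hK
  have parE : Even (E.1.val + E.2.val) := by simp [hE, ZMod.val_zero]
  have parI : ¬ Even (I.1.val + I.2.val) := by
    simp [hI, ZMod.val_zero, ZMod.val_one]
  have parJ : Even (J.1.val + J.2.val) := by
    simp [hJ, ZMod.val_one]
  have parK : ¬ Even (K.1.val + K.2.val) := by
    simp [hK, ZMod.val_zero, ZMod.val_one]
  have nepo : ∀ {a b : ZMod n₁ × ZMod n₂},
      Even (a.1.val + a.2.val) → ¬ Even (b.1.val + b.2.val) → a ≠ b := by
    intro a b ha hb h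
    exact hb (h ▸ ha)
  have hne_EJ : E ≠ J := by
    intro h
    rw [Prod.ext_iff] at h
    exact zmod_one_ne_zero h1 h.1.symm
  have hne_IK : I ≠ K := by
    intro h
    rw [Prod.ext_iff] at h
    exact zmod_one_ne_zero h1 h.1
  -- Step 1 : bring an even 1 to E
  set x1 := swap x e E with hx1
  have r1 : Reach x x1 := by rw [hx1]; exact reach_swap_pair h₁ h₂ x (iff_of_true hee parE)
  have hx1E : x1 E = true := by rw [hx1, swap_right]; exact hxe
  have hx1o : x1 o = true := by
    rw [hx1, swap_other x (nepo hee hoo).symm (nepo parE hoo).symm]; exact hxo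
  have hm1 : mEven x1 = mEven x := by rw [hx1]; exact mEven_swap x (iff_of_true hee parE)
  have ho1 : ones x1 = ones x := by rw [hx1]; exact ones_swap x e E
  -- find an even cell holding 0
  have hq : ∃ q : ZMod n₁ × ZMod n₂, x1 q = false ∧ Even (q.1.val + q.2.val) := by
    by_contra hcon
    push_neg at hcon
    have hall : ∀ q : ZMod n₁ × ZMod n₂, Even (q.1.val + q.2.val) → x1 q = true := by
      intro q hq'
      cases hxq : x1 q with
      | false => exact absurd hq' (hcon q hxq)
      | true => rfl
    have hfe : (Finset.univ.filter fun c : ZMod n₁ × ZMod n₂ => Even (c.1.val + c.2.val))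
        ⊆ (Finset.univ.filter fun c : ZMod n₁ × ZMod n₂ => x1 c = true) := by
      intro c hc
      simp only [Finset.mem_filter, Finset.mem_univ, true_and] at hc ⊢
      exact hall c hc
    have hmemo : o ∈ (Finset.univ.filter fun c : ZMod n₁ × ZMod n₂ => x1 c = true) := by
      simp [hx1o]
    have hnoto : o ∉ (Finset.univ.filter
        fun c : ZMod n₁ × ZMod n₂ => Even (c.1.val + c.2.val)) := by simp [hoo]
    have hlt := Finset.card_lt_card ((Finset.ssubset_iff_of_subset hfe).mpr ⟨o, hmemo, hnoto⟩)
    have h2e := two_mul_card_even hd1 hd2 (n₁ := n₁) (n₂ := n₂)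
    have hones1 : ones x1 =
        (Finset.univ.filter fun c : ZMod n₁ × ZMod n₂ => x1 c = true).card := rfl
    omega
  obtain ⟨q, hx1q, hqe⟩ := hq
  have hqE : q ≠ E := by
    intro h
    rw [h, hx1E] at hx1q
    exact Bool.noConfusion hx1q
  -- Step 2 : bring an even 0 to J
  set x2 := swap x1 q J with hx2
  have r2 : Reach x1 x2 := by rw [hx2]; exact reach_swap_pair h₁ h₂ x1 (iff_of_true hqe parJ)
  have hx2J : x2 J = false := by rw [hx2, swap_right]; exact hx1q
  have hx2E : x2 E = true := by
    rw [hx2, swap_other x1 (Ne.symm hqE) hne_EJ]; exact hx1E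
  have hx2o : x2 o = true := by
    rw [hx2, swap_other x1 (nepo hqe hoo).symm (nepo parJ hoo).symm]; exact hx1o
  have hm2 : mEven x2 = mEven x1 := by rw [hx2]; exact mEven_swap x1 (iff_of_true hqe parJ)
  have ho2 : ones x2 = ones x1 := by rw [hx2]; exact ones_swap x1 q J
  -- Step 3 : bring an odd 1 to I
  set x3 := swap x2 o I with hx3
  have r3 : Reach x2 x3 := by rw [hx3]; exact reach_swap_pair h₁ h₂ x2 (iff_of_false hoo parI)
  have hx3I : x3 I = true := by rw [hx3, swap_right]; exact hx2o
  have hx3E : x3 E = true := by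
    rw [hx3, swap_other x2 (nepo parE hoo) (nepo parE parI)]; exact hx2E
  have hx3J : x3 J = false := by
    rw [hx3, swap_other x2 (nepo parJ hoo) (nepo parJ parI)]; exact hx2J
  have hm3 : mEven x3 = mEven x2 := by rw [hx3]; exact mEven_swap x2 (iff_of_false hoo parI)
  have ho3 : ones x3 = ones x2 := by rw [hx3]; exact ones_swap x2 o I
  -- find an odd cell holding 0
  have hr : ∃ r : ZMod n₁ × ZMod n₂, x3 r = false ∧ ¬ Even (r.1.val + r.2.val) := by
    by_contra hcon
    push_neg at hcon
    have hall : ∀ q' : ZMod n₁ × ZMod n₂, ¬ Even (q'.1.val + q'.2.val) → x3 q' = true := by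
      intro q' hq'
      cases hxq : x3 q' with
      | false => exact absurd (hcon q' hxq) hq'
      | true => rfl
    have hfe : (Finset.univ.filter fun c : ZMod n₁ × ZMod n₂ => ¬ Even (c.1.val + c.2.val))
        ⊆ (Finset.univ.filter fun c : ZMod n₁ × ZMod n₂ => x3 c = true) := by
      intro c hc
      simp only [Finset.mem_filter, Finset.mem_univ, true_and] at hc ⊢
      exact hall c hc
    have hmemE : E ∈ (Finset.univ.filter fun c : ZMod n₁ × ZMod n₂ => x3 c = true) := by
      simp [hx3E]
    have hnotE : E ∉ (Finset.univ.filter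
        fun c : ZMod n₁ × ZMod n₂ => ¬ Even (c.1.val + c.2.val)) := by simp [parE]
    have hlt := Finset.card_lt_card ((Finset.ssubset_iff_of_subset hfe).mpr ⟨E, hmemE, hnotE⟩)
    have h2e := two_mul_card_odd hd1 hd2 (n₁ := n₁) (n₂ := n₂)
    have hones3 : ones x3 =
        (Finset.univ.filter fun c : ZMod n₁ × ZMod n₂ => x3 c = true).card := rfl
    omega
  obtain ⟨r, hx3r, hro⟩ := hr
  have hrI : r ≠ I := by
    intro h
    rw [h, hx3I] at hx3r
    exact Bool.noConfusion hx3r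
  -- Step 4 : bring an odd 0 to K
  set x4 := swap x3 r K with hx4
  have r4 : Reach x3 x4 := by rw [hx4]; exact reach_swap_pair h₁ h₂ x3 (iff_of_false hro parK)
  have hx4K : x4 K = false := by rw [hx4, swap_right]; exact hx3r
  have hx4I : x4 I = true := by
    rw [hx4, swap_other x3 (Ne.symm hrI) hne_IK]; exact hx3I
  have hx4E : x4 E = true := by
    rw [hx4, swap_other x3 (nepo parE hro) (nepo parE parK)]; exact hx3E
  have hx4J : x4 J = false := by
    rw [hx4, swap_other x3 (nepo parJ hro) (nepo parJ parK)]; exact hx3J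
  have hm4 : mEven x4 = mEven x3 := by rw [hx4]; exact mEven_swap x3 (iff_of_false hro parK)
  have ho4 : ones x4 = ones x3 := by rw [hx4]; exact ones_swap x3 r K
  -- Step 5 : the adjacent swap
  have hadjIJ : adj4 I J := by
    refine Or.inr (Or.inl ?_)
    rw [hI, hJ]
    simp [Prod.ext_iff]
  have hadjIE : adj4 I E := by
    refine Or.inr (Or.inr (Or.inl ?_))
    rw [hI, hE]
    simp [Prod.ext_iff]
  have hadjJK : adj4 J K := by
    refine Or.inr (Or.inr (Or.inl ?_))
    rw [hJ, hK]
    simp [Prod.ext_iff]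
  have hnisoI : ¬ isolated x4 I := fun hiso => (hiso E hadjIE) (by rw [hx4E, hx4I])
  have hnisoJ : ¬ isolated x4 J := fun hiso => (hiso K hadjJK) (by rw [hx4K, hx4J])
  set x5 := swap x4 I J with hx5
  have r5 : Reach x4 x5 :=
    Reach.single (i := I) (j := J) (Or.inl hadjIJ)
      (by rw [hx5]; exact PhiC_adj x4 hadjIJ hnisoI hnisoJ)
  have hm5 : mEven x5 = mEven x4 + 1 := by
    rw [hx5]; exact mEven_swap_inc x4 parI parJ hx4I hx4J
  have ho5 : ones x5 = ones x4 := by rw [hx5]; exact ones_swap x4 I J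
  obtain ⟨us, hmem, hfold⟩ := ((((r1.trans r2).trans r3).trans r4).trans r5)
  refine ⟨us, hmem, ?_, ?_⟩
  · rw [hfold, hm5, hm4, hm3, hm2, hm1]
  · rw [hfold, ho5, ho4, ho3, ho2, ho1]
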